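/- arXiv:1907.02137 — 2 statements merged into one kernel-verified Lean document; each statement's English description precedes it below -/
import Mathlib

section
/- Let (A, M, ω) be a mutation algebra over K. Then (A, ω) is a weighted K-algebra, and for every f ∈ K(T) with ∂_i(f) = 0 for every variable t_i, one has ρ̂(f) = 0 for every substitution ρ : T → H_ω. In other words, mutation algebras satisfy every Peirce-evanescent identity. -/
namespace Evanescent

universe u v

variable {T : Type u}

/-- The commutativity relation on the free magma on `T`. -/
inductive CommRel (T : Type u) : FreeMagma T → FreeMagma T → Prop
  | comm (a b : FreeMagma T) : CommRel T (a * b) (b * a)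
  | mul_left {a b : FreeMagma T} (c : FreeMagma T) :
      CommRel T a b → CommRel T (a * c) (b * c)
  | mul_right (c : FreeMagma T) {a b : FreeMagma T} :
      CommRel T a b → CommRel T (c * a) (c * b)

/-- The free commutative magma on `T`: the set of commutative nonassociative
monomials (words) in the variables `T`. -/
def FreeCommMagma (T : Type u) : Type u := Quot (CommRel T)

namespace FreeCommMagma

instance : Mul (FreeCommMagma T) :=
  ⟨Quot.map₂ (· * ·) (fun a _ _ h => CommRel.mul_right a h)
    (fun _ _ b h => CommRel.mul_left b h)⟩

/-- The class of a nonassociative word in the free commutative magma. -/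
def mk (w : FreeMagma T) : FreeCommMagma T := Quot.mk (CommRel T) w

/-- The generator of the free commutative magma corresponding to a variable. -/
def of (t : T) : FreeCommMagma T := mk (FreeMagma.of t)

@[simp] lemma mk_mul (a b : FreeMagma T) : mk a * mk b = mk (a * b) := rfl

protected lemma mul_comm (a b : FreeCommMagma T) : a * b = b * a := by
  induction a using Quot.ind
  induction b using Quot.ind
  exact Quot.sound (CommRel.comm _ _)

instance : CommMagma (FreeCommMagma T) := ⟨FreeCommMagma.mul_comm⟩

end FreeCommMagma

section Peirce

variable (R : Type v) [Semiring R] [DecidableEq T]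

/-- The Peirce polynomial of a (noncommutative) nonassociative word, with
coefficients in `R`. -/
noncomputable def peirceAux (i : T) : FreeMagma T → Polynomial R
  | .of j => if j = i then 1 else 0
  | .mul u v => Polynomial.X * (peirceAux i u + peirceAux i v)

@[simp] lemma peirceAux_mul (i : T) (u v : FreeMagma T) :
    peirceAux R i (u * v) = Polynomial.X * (peirceAux R i u + peirceAux R i v) := rfl

@[simp] lemma peirceAux_of (i j : T) :
    peirceAux R i (FreeMagma.of j) = if j = i then 1 else 0 := rfl

/-- The number of occurrences of the variable `i` in a nonassociative word. -/
def countAux (i : T) : FreeMagma T → ℕ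
  | .of j => if j = i then 1 else 0
  | .mul u v => countAux i u + countAux i v

@[simp] lemma countAux_mul (i : T) (u v : FreeMagma T) :
    countAux i (u * v) = countAux i u + countAux i v := rfl

lemma peirceAux_respects (i : T) {a b : FreeMagma T} (h : CommRel T a b) :
    peirceAux R i a = peirceAux R i b := by
  induction h with
  | comm a b => simp [add_comm]
  | mul_left c h ih => simp [ih]
  | mul_right c h ih => simp [ih]

lemma countAux_respects (i : T) {a b : FreeMagma T} (h : CommRel T a b) :
    countAux i a = countAux i b := by
  induction h with
  | comm a b => simp [Nat.add_comm]
  | mul_left c h ih => simp [ih]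
  | mul_right c h ih => simp [ih]

/-- The Peirce polynomial `∂ᵢ(w)` of a commutative nonassociative monomial `w`,
determined by `∂ᵢ(tᵢ) = 1`, `∂ᵢ(tⱼ) = 0` for `j ≠ i`, and
`∂ᵢ(u·v) = X·(∂ᵢ(u) + ∂ᵢ(v))`. -/
noncomputable def FreeCommMagma.peirce (i : T) : FreeCommMagma T → Polynomial R :=
  Quot.lift (peirceAux R i) fun _ _ h => peirceAux_respects R i h

/-- The number of occurrences (degree) of the variable `i` in a commutative
nonassociative monomial. -/
def FreeCommMagma.count (i : T) : FreeCommMagma T → ℕ :=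
  Quot.lift (countAux i) fun _ _ h => countAux_respects i h

end Peirce

/-- Principal powers of an element of a magma: `ppow a n = a^(n+1)`,
i.e. `ppow a 0 = a` and `ppow a (n+1) = a * (ppow a n)`. -/
def ppow {M : Type v} [Mul M] (a : M) : ℕ → M
  | 0 => a
  | n + 1 => a * ppow a n

/-- Iterated left multiplication: `lpow a r g = a^{{r}} g`, i.e. `lpow a 0 g = g` and
`lpow a (r+1) g = a * (lpow a r g)`. -/
def lpow {M : Type v} [Mul M] (a : M) : ℕ → M → M
  | 0, g => g
  | r + 1, g => a * lpow a r g

section Algebra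

variable (K : Type v) [Field K]

/-- A commutative nonassociative monomial, viewed as an element of the free
commutative nonassociative algebra `K(T)` (realized as the magma algebra of the
free commutative magma). -/
noncomputable def mono (w : FreeCommMagma T) : MonoidAlgebra K (FreeCommMagma T) :=
  MonoidAlgebra.single w 1

/-- The augmentation (sum of the coefficients) of an element of the free
commutative nonassociative algebra. -/
noncomputable def aug : MonoidAlgebra K (FreeCommMagma T) →ₗ[K] K :=
  Finsupp.lsum K (fun _ => LinearMap.id) ∘ₗ (MonoidAlgebra.coeffLinearEquiv K).toLinearMap

/-- The Peirce polynomial `∂ᵢ : K(T) → K[X]`, the `K`-linear map determined on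
monomials by `∂ᵢ(tᵢ) = 1`, `∂ᵢ(tⱼ) = 0` for `j ≠ i`, and `∂ᵢ(u·v) = X·(∂ᵢ(u) + ∂ᵢ(v))`. -/
noncomputable def Dp [DecidableEq T] (i : T) :
    MonoidAlgebra K (FreeCommMagma T) →ₗ[K] Polynomial K :=
  Finsupp.lsum K (fun w => LinearMap.toSpanSingleton K (Polynomial K)
    (FreeCommMagma.peirce K i w)) ∘ₗ (MonoidAlgebra.coeffLinearEquiv K).toLinearMap

/-- The free commutative nonassociative algebra is commutative. -/
lemma fca_mul_comm (f g : MonoidAlgebra K (FreeCommMagma T)) : f * g = g * f := by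
  rw [MonoidAlgebra.mul_def, MonoidAlgebra.mul_def, Finsupp.sum_comm]
  refine Finsupp.sum_congr fun a _ => Finsupp.sum_congr fun c _ => ?_
  rw [FreeCommMagma.mul_comm, mul_comm (f.coeff c) (g.coeff a)]

end Algebra

section Subst

variable (K : Type v) [Field K] {A : Type*} [Mul A]

/-- Evaluation of a nonassociative word under a substitution of the variables. -/
def evalAux (ρ : T → A) : FreeMagma T → A
  | .of t => ρ t
  | .mul u v => evalAux ρ u * evalAux ρ v

@[simp] lemma evalAux_mul (ρ : T → A) (u v : FreeMagma T) :
    evalAux ρ (u * v) = evalAux ρ u * evalAux ρ v := rfl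

/-- Evaluation of a commutative nonassociative monomial in a commutative magma
under a substitution of the variables. -/
def FreeCommMagma.eval (hA : ∀ a b : A, a * b = b * a) (ρ : T → A) :
    FreeCommMagma T → A :=
  Quot.lift (evalAux ρ) (by
    intro a b h
    induction h with
    | comm a b => exact hA _ _
    | mul_left c h ih => simp [ih]
    | mul_right c h ih => simp [ih])

/-- The substitution homomorphism `ρ̂ : K(T) → A` extending a substitution
`ρ : T → A` of the variables, for `A` a commutative nonassociative `K`-algebra. -/
noncomputable def subst [AddCommMonoid A] [Module K A]
    (hA : ∀ a b : A, a * b = b * a) (ρ : T → A)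
    (f : MonoidAlgebra K (FreeCommMagma T)) : A :=
  f.coeff.sum fun w c => c • FreeCommMagma.eval hA ρ w

end Subst

/-- The list of the leaves of a nonassociative word (a rooted binary tree with
leaves labeled by the variables), together with their heights. -/
def leaves : FreeMagma T → List (T × ℕ)
  | .of t => [(t, 0)]
  | .mul u v => (leaves u ++ leaves v).map fun p => (p.1, p.2 + 1)

end Evanescent

namespace Evanescent

section AuxLemmas

variable {T : Type*}

/-- Variables occurring in a nonassociative word. -/
def varsAux [DecidableEq T] : FreeMagma T → Finset T
  | .of t => {t}
  | .mul u v => varsAux u ∪ varsAux v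

@[simp] lemma varsAux_of [DecidableEq T] (t : T) : varsAux (FreeMagma.of t) = {t} := rfl

@[simp] lemma varsAux_mul [DecidableEq T] (u v : FreeMagma T) :
    varsAux (u * v) = varsAux u ∪ varsAux v := rfl

lemma varsAux_respects [DecidableEq T] {a b : FreeMagma T} (h : CommRel T a b) :
    varsAux a = varsAux b := by
  induction h with
  | comm a b => simp [Finset.union_comm]
  | mul_left c h ih => simp [ih]
  | mul_right c h ih => simp [ih]

/-- Variables occurring in a commutative monomial. -/
def FreeCommMagma.vars [DecidableEq T] : FreeCommMagma T → Finset T :=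
  Quot.lift varsAux fun _ _ h => varsAux_respects h

lemma peirceAux_eq_zero (R : Type*) [Semiring R] [DecidableEq T] (i : T)
    (w : FreeMagma T) (h : i ∉ varsAux w) : peirceAux R i w = 0 := by
  induction w with
  | ih1 t =>
      simp only [varsAux_of, Finset.mem_singleton] at h
      rw [peirceAux_of, if_neg (fun hh => h hh.symm)]
  | ih2 u v ihu ihv =>
      simp only [varsAux_mul, Finset.mem_union, not_or] at h
      rw [peirceAux_mul, ihu h.1, ihv h.2, add_zero, mul_zero]

lemma peirce_eq_zero (R : Type*) [Semiring R] [DecidableEq T] (i : T)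
    (w : FreeCommMagma T) (h : i ∉ FreeCommMagma.vars w) :
    FreeCommMagma.peirce R i w = 0 := by
  induction w using Quot.ind with | _ u => exact peirceAux_eq_zero R i u h

variable {K : Type*} [Field K] {A : Type*} [AddCommGroup A] [Module K A] [Mul A]

lemma eval_key [DecidableEq T] (hchar : (2 : K) ≠ 0)
    (M : A →ₗ[K] A) (ω : A →ₗ[K] K) (hωM : ∀ x, ω (M x) = ω x)
    (hmul : ∀ x y : A, x * y = (2 : K)⁻¹ • (ω y • M x + ω x • M y))
    (ρ : T → A) (hρ : ∀ t, ω (ρ t) = 1) (w : FreeMagma T) :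
    ω (evalAux ρ w) = 1 ∧
    evalAux ρ w = ∑ i ∈ varsAux w,
      (Polynomial.aeval ((2:K)⁻¹ • M : Module.End K A) (peirceAux K i w)) (ρ i) := by
  set N : Module.End K A := (2:K)⁻¹ • M with hN
  induction w with
  | ih1 t =>
      refine ⟨hρ t, ?_⟩
      simp [peirceAux_of, evalAux]
  | ih2 u v ihu ihv =>
      obtain ⟨hu1, hu2⟩ := ihu
      obtain ⟨hv1, hv2⟩ := ihv
      have hm : evalAux ρ (u * v) = N (evalAux ρ u + evalAux ρ v) := by
        rw [evalAux_mul, hmul, hu1, hv1, one_smul, one_smul, hN]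
        simp [map_add]
      constructor
      · rw [hm, hN]
        simp only [LinearMap.smul_apply, map_smul, map_add, hωM, hu1, hv1, smul_eq_mul]
        field_simp
        norm_num
      · have key : ∀ p : Polynomial K, ∀ a : A,
            (Polynomial.aeval N (Polynomial.X * p)) a = N ((Polynomial.aeval N p) a) := by
          intro p a
          rw [map_mul, Polynomial.aeval_X]
          rfl
      
        have hcongr : ∀ i ∈ varsAux u ∪ varsAux v,
            (Polynomial.aeval N (peirceAux K i (u * v))) (ρ i)
              = N ((Polynomial.aeval N (peirceAux K i u)) (ρ i))
                + N ((Polynomial.aeval N (peirceAux K i v)) (ρ i)) := by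
          intro i _
          rw [peirceAux_mul, key, map_add, LinearMap.add_apply, map_add]
        have h1 : ∑ i ∈ varsAux u, (Polynomial.aeval N (peirceAux K i u)) (ρ i)
            = ∑ i ∈ varsAux u ∪ varsAux v, (Polynomial.aeval N (peirceAux K i u)) (ρ i) := by
          refine Finset.sum_subset Finset.subset_union_left ?_
          intro i _ hi
          rw [peirceAux_eq_zero K i u hi]; simp
        have h2 : ∑ i ∈ varsAux v, (Polynomial.aeval N (peirceAux K i v)) (ρ i)
            = ∑ i ∈ varsAux u ∪ varsAux v, (Polynomial.aeval N (peirceAux K i v)) (ρ i) := by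
          refine Finset.sum_subset Finset.subset_union_right ?_
          intro i _ hi
          rw [peirceAux_eq_zero K i v hi]; simp
        rw [hm, hu2, hv2, h1, h2, varsAux_mul, Finset.sum_congr rfl hcongr,
          Finset.sum_add_distrib, ← map_sum, ← map_sum, ← map_add]

end AuxLemmas

end Evanescent


open Evanescent in
/-- A mutation algebra `(A, M, ω)` is a weighted `K`-algebra and
satisfies every Peirce-evanescent identity. -/
theorem mutation_algebra_satisfies_evanescent
    {K : Type*} [Field K] (hchar : (2 : K) ≠ 0)
    {T : Type*} [DecidableEq T]
    {A : Type*} [AddCommGroup A] [Module K A] [Mul A]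
    (M : A →ₗ[K] A) (ω : A →ₗ[K] K) (hω : ω ≠ 0) (hωM : ∀ x, ω (M x) = ω x)
    (hmul : ∀ x y : A, x * y = (2 : K)⁻¹ • (ω y • M x + ω x • M y)) :
    (∀ x y : A, ω (x * y) = ω x * ω y) ∧
    ∀ f : MonoidAlgebra K (FreeCommMagma T), (∀ i : T, Dp K i f = 0) →
      ∀ ρ : T → A, (∀ t, ω (ρ t) = 1) →
        subst K (fun a b => by rw [hmul a b, hmul b a, add_comm]) ρ f = 0 := by
  have hweight : ∀ x y : A, ω (x * y) = ω x * ω y := by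
    intro x y
    rw [hmul, map_smul, map_add, map_smul, map_smul, hωM, hωM, smul_eq_mul, smul_eq_mul,
      smul_eq_mul]
    field_simp
    ring
  refine ⟨hweight, ?_⟩
  intro f hf ρ hρ
  set N : Module.End K A := (2:K)⁻¹ • M with hN
  have hA : ∀ a b : A, a * b = b * a := fun a b => by rw [hmul a b, hmul b a, add_comm]
  have hev : ∀ w : FreeCommMagma T, FreeCommMagma.eval hA ρ w
      = ∑ i ∈ FreeCommMagma.vars w,
          (Polynomial.aeval N (FreeCommMagma.peirce K i w)) (ρ i) := by
    intro w
    induction w using Quot.ind with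
    | _ u => exact (eval_key hchar M ω hωM hmul ρ hρ u).2
  set S : Finset T := f.coeff.support.sup (fun w => FreeCommMagma.vars w) with hS
  have hevS : ∀ w ∈ f.coeff.support, FreeCommMagma.eval hA ρ w
      = ∑ i ∈ S, (Polynomial.aeval N (FreeCommMagma.peirce K i w)) (ρ i) := by
    intro w hw
    rw [hev w]
    exact Finset.sum_subset (Finset.le_sup hw) (fun i _ hi => by
      rw [peirce_eq_zero K i w hi]; simp)
  have hDp : ∀ i : T, ∑ w ∈ f.coeff.support, f.coeff w • FreeCommMagma.peirce K i w = 0 := by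
    intro i
    have h := hf i
    simpa [Dp, Finsupp.lsum_apply, Finsupp.sum, LinearMap.toSpanSingleton_apply] using h
  show f.coeff.sum (fun w c => c • FreeCommMagma.eval hA ρ w) = 0
  rw [Finsupp.sum]
  calc ∑ w ∈ f.coeff.support, f.coeff w • FreeCommMagma.eval hA ρ w
      = ∑ w ∈ f.coeff.support, ∑ i ∈ S,
          f.coeff w • (Polynomial.aeval N (FreeCommMagma.peirce K i w)) (ρ i) := by
        refine Finset.sum_congr rfl fun w hw => ?_
        rw [hevS w hw, Finset.smul_sum]
    _ = ∑ i ∈ S, ∑ w ∈ f.coeff.support,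
          f.coeff w • (Polynomial.aeval N (FreeCommMagma.peirce K i w)) (ρ i) :=
        Finset.sum_comm
    _ = 0 := by
        refine Finset.sum_eq_zero fun i _ => ?_
        have : (Polynomial.aeval N
            (∑ w ∈ f.coeff.support, f.coeff w • FreeCommMagma.peirce K i w)) (ρ i) = 0 := by
          rw [hDp i]; simp
        rw [← this, map_sum, LinearMap.sum_apply]
        refine Finset.sum_congr rfl fun w _ => ?_
        rw [map_smul, LinearMap.smul_apply]
end

section
/- For integers p, q ≥ 1 set E_{p,q} = x^p·x^q − x^{p+1} − x^{q+1} + x² in K(x) (principal powers), and let ℰ be the two-sided ideal of K(x) generated by {E_{p,q} : p, q ≥ 1}. Then: (i) every f ∈ ℰ satisfies ε(f) = 0 and ∂_x(f) = 0, so every nonzero element of ℰ is a Peirce-evanescent identity; (ii) every commutative nonassociative monomial w of degree n is congruent modulo ℰ to an element π(w) of the span of the principal powers {x^k : 1 ≤ k ≤ n} with integer coefficients and ε(π(w)) = 1; in particular, for n ≥ 4 and w ≠ x^n, w − π(w) is a Peirce-evanescent identity. -/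
namespace Evanescent

/-- The single variable `x` of `K(x)`, as a monomial. -/
def x1 : FreeCommMagma Unit := FreeCommMagma.of ()

/-- The generators `E_{p,q} = x^p·x^q − x^{p+1} − x^{q+1} + x²` (for `p, q ≥ 1`);
here `ppow x1 k` denotes `x^(k+1)`. -/
noncomputable def Efam (K : Type*) [Field K] (p q : ℕ) :
    MonoidAlgebra K (FreeCommMagma Unit) :=
  mono K (ppow x1 p * ppow x1 q) - mono K (ppow x1 (p + 1))
    - mono K (ppow x1 (q + 1)) + mono K (ppow x1 1)

end Evanescent


namespace Evanescent

section Helpers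

variable {K : Type*} [Field K]

lemma aug_single (w : FreeCommMagma Unit) (c : K) :
    aug K (MonoidAlgebra.single w c) = c := by
  show Finsupp.lsum K (fun _ => LinearMap.id) (Finsupp.single w c) = c
  exact Finsupp.lsum_single _ _ _ _

lemma aug_mono (w : FreeCommMagma Unit) : aug K (mono K w) = 1 := aug_single w 1

lemma Dp_single (w : FreeCommMagma Unit) (c : K) :
    Dp K () (MonoidAlgebra.single w c) = c • FreeCommMagma.peirce K () w := by
  show Finsupp.lsum K (fun w => LinearMap.toSpanSingleton K (Polynomial K)
    (FreeCommMagma.peirce K () w)) (Finsupp.single w c) = _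
  exact Finsupp.lsum_single _ _ _ _

lemma Dp_mono (w : FreeCommMagma Unit) :
    Dp K () (mono K w) = FreeCommMagma.peirce K () w := by
  simp [mono, Dp_single]

lemma peirce_mul (a b : FreeCommMagma Unit) :
    FreeCommMagma.peirce K () (a * b)
      = Polynomial.X * (FreeCommMagma.peirce K () a + FreeCommMagma.peirce K () b) := by
  induction a using Quot.ind
  induction b using Quot.ind
  rfl

lemma peirce_x1 : FreeCommMagma.peirce K () x1 = 1 := by
  show peirceAux K () (FreeMagma.of ()) = 1
  simp

lemma count_mul (a b : FreeCommMagma Unit) :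
    FreeCommMagma.count () (a * b)
      = FreeCommMagma.count () a + FreeCommMagma.count () b := by
  induction a using Quot.ind
  induction b using Quot.ind
  rfl

lemma count_x1 : FreeCommMagma.count () x1 = 1 := by
  show countAux () (FreeMagma.of ()) = 1
  simp [countAux]

lemma count_ppow (k : ℕ) : FreeCommMagma.count () (ppow x1 k) = k + 1 := by
  induction k with
  | zero => exact count_x1
  | succ n ih =>
      show FreeCommMagma.count () (x1 * ppow x1 n) = _
      rw [count_mul, ih, count_x1]
      omega

lemma countAux_pos (w : FreeMagma Unit) : 1 ≤ countAux () w := by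
  induction w with
  | ih1 t => simp [countAux]
  | ih2 u v ihu ihv => simp only [countAux_mul]; omega

lemma aug_mul (f g : MonoidAlgebra K (FreeCommMagma Unit)) :
    aug K (f * g) = aug K f * aug K g := by
  rw [MonoidAlgebra.mul_def]
  rw [map_finsuppSum]
  have haug : aug K f = f.coeff.sum fun _ c => c := by
    rw [aug, LinearMap.comp_apply, Finsupp.lsum_apply]; rfl
  rw [haug]
  rw [Finsupp.sum_mul]
  refine Finsupp.sum_congr fun a _ => ?_
  rw [map_finsuppSum]
  have haug' : aug K g = g.coeff.sum fun _ c => c := by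
    rw [aug, LinearMap.comp_apply, Finsupp.lsum_apply]; rfl
  rw [haug', Finsupp.mul_sum]
  exact Finsupp.sum_congr fun b _ => by rw [aug_single]

lemma Dp_mul (f g : MonoidAlgebra K (FreeCommMagma Unit)) :
    Dp K () (f * g)
      = Polynomial.X * (aug K g • Dp K () f + aug K f • Dp K () g) := by
  induction f using MonoidAlgebra.induction_linear with
  | zero => simp
  | add f1 f2 h1 h2 =>
      rw [add_mul, map_add, h1, h2, map_add, map_add]
      rw [smul_add, add_smul]
      ring_nf
  | single a b =>
      induction g using MonoidAlgebra.induction_linear with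
      | zero => simp
      | add g1 g2 h1 h2 =>
          rw [mul_add, map_add, h1, h2, map_add, map_add]
          rw [smul_add, add_smul]
          ring_nf
      | single a' b' =>
          rw [MonoidAlgebra.single_mul_single, Dp_single, Dp_single, Dp_single,
            aug_single, aug_single, peirce_mul]
          simp only [Polynomial.smul_eq_C_mul, Polynomial.C_mul]
          ring

end Helpers

end Evanescent


namespace Evanescent

section PartOne

variable {K : Type*} [Field K]

lemma ppow_zero_def : ppow x1 0 = x1 := rfl

lemma ppow_succ_def (k : ℕ) : ppow x1 (k + 1) = x1 * ppow x1 k := rfl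

lemma aug_Efam (p q : ℕ) : aug K (Efam K p q) = 0 := by
  simp only [Efam, map_add, map_sub, aug_mono]
  ring

lemma Dp_Efam (p q : ℕ) : Dp K () (Efam K p q) = 0 := by
  simp only [Efam, map_add, map_sub, Dp_mono, ppow_succ_def, peirce_mul, ppow_zero_def, peirce_x1]
  ring

lemma mem_span_of_mem_span {f : MonoidAlgebra K (FreeCommMagma Unit)}
    (hf : f ∈ TwoSidedIdeal.span {f : MonoidAlgebra K (FreeCommMagma Unit) |
      ∃ p q : ℕ, f = Efam K p q}) :
    aug K f = 0 ∧ Dp K () f = 0 := by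
  let J : TwoSidedIdeal (MonoidAlgebra K (FreeCommMagma Unit)) :=
    TwoSidedIdeal.mk' {f | aug K f = 0 ∧ Dp K () f = 0}
      ⟨map_zero _, map_zero _⟩
      (fun hx hy => ⟨by rw [map_add, hx.1, hy.1, add_zero],
        by rw [map_add, hx.2, hy.2, add_zero]⟩)
      (fun hx => ⟨by rw [map_neg, hx.1, neg_zero], by rw [map_neg, hx.2, neg_zero]⟩)
      (fun {x y} hy => ⟨by rw [aug_mul, hy.1, mul_zero],
        by rw [Dp_mul, hy.1, hy.2, zero_smul, smul_zero, add_zero, mul_zero]⟩)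
      (fun {x y} hx => ⟨by rw [aug_mul, hx.1, zero_mul],
        by rw [Dp_mul, hx.1, hx.2, zero_smul, smul_zero, zero_add, mul_zero]⟩)
  have hsub : {f : MonoidAlgebra K (FreeCommMagma Unit) | ∃ p q : ℕ, f = Efam K p q}
      ⊆ (J : Set (MonoidAlgebra K (FreeCommMagma Unit))) := by
    rintro f ⟨p, q, rfl⟩
    show Efam K p q ∈ J
    rw [TwoSidedIdeal.mem_mk']
    exact ⟨aug_Efam p q, Dp_Efam p q⟩
  have := TwoSidedIdeal.mem_span_iff.mp hf J hsub
  rwa [TwoSidedIdeal.mem_mk'] at this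

end PartOne

end Evanescent


namespace Evanescent

section PartTwo

variable {K : Type*} [Field K]

lemma mono_mul (a b : FreeCommMagma Unit) :
    mono K (a * b) = mono K a * mono K b := by
  rw [mono, mono, mono, MonoidAlgebra.single_mul_single, one_mul]

lemma Efam_mem (p q : ℕ) :
    Efam K p q ∈ TwoSidedIdeal.span {f : MonoidAlgebra K (FreeCommMagma Unit) |
      ∃ p q : ℕ, f = Efam K p q} :=
  TwoSidedIdeal.subset_span ⟨p, q, rfl⟩

lemma key (w : FreeMagma Unit) :
    ∃ c : ℕ → ℤ,
      (∀ k, countAux () w ≤ k → c k = 0) ∧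
      (∑ k ∈ Finset.range (countAux () w), c k = 1) ∧
      mono K (FreeCommMagma.mk w) -
        ∑ k ∈ Finset.range (countAux () w), (c k : K) • mono K (ppow x1 k)
        ∈ TwoSidedIdeal.span {f : MonoidAlgebra K (FreeCommMagma Unit) |
            ∃ p q : ℕ, f = Efam K p q} := by
  induction w with
  | ih1 t =>
      obtain ⟨⟩ := t
      have hcount : countAux () (FreeMagma.of ()) = 1 := by simp [countAux]
      refine ⟨fun k => if k = 0 then 1 else 0, ?_, ?_, ?_⟩
      · intro k hk
        rw [hcount] at hk
        simp [show k ≠ 0 by omega]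
      · rw [hcount, Finset.sum_range_one]; simp
      · rw [hcount, Finset.sum_range_one]
        have : mono K (FreeCommMagma.mk (FreeMagma.of ()))
            = ((if (0:ℕ) = 0 then (1:ℤ) else 0 : ℤ) : K) • mono K (ppow x1 0) := by
          simp [ppow_zero_def]; rfl
        rw [this, sub_self]
        exact TwoSidedIdeal.zero_mem _
  | ih2 u v ihu ihv =>
      obtain ⟨cu, hu0, hu1, hu⟩ := ihu
      obtain ⟨cv, hv0, hv1, hv⟩ := ihv
      set p := countAux () u with hpdef
      set q := countAux () v with hqdef
      have hp1 : 1 ≤ p := countAux_pos u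
      have hq1 : 1 ≤ q := countAux_pos v
      have hpq : countAux () (u * v) = p + q := rfl
      obtain ⟨m, hm⟩ : ∃ m, p + q = m + 1 := ⟨p + q - 1, by omega⟩
      have hm1 : 1 ≤ m := by omega
      have hpm : p ≤ m := by omega
      have hqm : q ≤ m := by omega
      set c : ℕ → ℤ := fun k =>
        if k = 0 then 0 else cu (k-1) + cv (k-1) - (if k = 1 then 1 else 0) with hc
      have hcsucc : ∀ j : ℕ, c (j+1) = cu j + cv j - (if j = 0 then 1 else 0) := by
        intro j
        simp only [hc, Nat.succ_ne_zero, if_false, Nat.add_sub_cancel]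
        congr 1
        simp
      -- integer casts of the augmentation facts
      have hu1K : ∑ k ∈ Finset.range p, ((cu k : ℤ) : K) = 1 := by
        have := congrArg (fun z : ℤ => (z : K)) hu1
        push_cast at this
        simpa using this
      have hv1K : ∑ k ∈ Finset.range q, ((cv k : ℤ) : K) = 1 := by
        have := congrArg (fun z : ℤ => (z : K)) hv1
        push_cast at this
        simpa using this
      -- abbreviations
      set P : ℕ → MonoidAlgebra K (FreeCommMagma Unit) := fun k => mono K (ppow x1 k)
        with hP
      set gu : MonoidAlgebra K (FreeCommMagma Unit)
        := ∑ k ∈ Finset.range p, ((cu k : ℤ) : K) • P k with hgu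
      set gv : MonoidAlgebra K (FreeCommMagma Unit)
        := ∑ k ∈ Finset.range q, ((cv k : ℤ) : K) • P k with hgv
      refine ⟨c, ?_, ?_, ?_⟩
      · intro k hk
        rw [hpq] at hk
        have hk0 : k ≠ 0 := by omega
        have hk1 : k ≠ 1 := by omega
        simp only [hc, hk0, if_false, hk1, sub_zero,
          hu0 (k-1) (by omega), hv0 (k-1) (by omega), add_zero]
      · rw [hpq, hm, Finset.sum_range_succ']
        have hc0 : c 0 = 0 := by simp [hc]
        rw [hc0, add_zero]
        simp only [hcsucc]
        rw [Finset.sum_sub_distrib, Finset.sum_add_distrib]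
        have e1 : ∑ j ∈ Finset.range m, cu j = 1 := by
          rw [← Finset.sum_subset (Finset.range_subset_range.mpr hpm)
            (fun j _ hj => hu0 j (by simpa using hj))]
          exact hu1
        have e2 : ∑ j ∈ Finset.range m, cv j = 1 := by
          rw [← Finset.sum_subset (Finset.range_subset_range.mpr hqm)
            (fun j _ hj => hv0 j (by simpa using hj))]
          exact hv1
        have e3 : ∑ j ∈ Finset.range m, (if j = 0 then (1:ℤ) else 0) = 1 := by
          rw [Finset.sum_ite_eq' (Finset.range m) 0 (fun _ => (1:ℤ))]
          simp [show 0 < m by omega]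
        rw [e1, e2, e3]
        norm_num
      · -- the membership
        rw [hpq]
        set I := TwoSidedIdeal.span {f : MonoidAlgebra K (FreeCommMagma Unit) |
            ∃ p q : ℕ, f = Efam K p q} with hI
        set G : MonoidAlgebra K (FreeCommMagma Unit)
          := ∑ k ∈ Finset.range (p+q), ((c k : ℤ) : K) • P k with hG
        -- Step A
        have hA : mono K (FreeCommMagma.mk (u * v)) - gu * gv ∈ I := by
          have h1 : mono K (FreeCommMagma.mk (u * v))
              = mono K (FreeCommMagma.mk u) * mono K (FreeCommMagma.mk v) := by
            rw [← FreeCommMagma.mk_mul, mono_mul]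
          have h2 : mono K (FreeCommMagma.mk u) * mono K (FreeCommMagma.mk v) - gu * gv
              = (mono K (FreeCommMagma.mk u) - gu) * mono K (FreeCommMagma.mk v)
                + gu * (mono K (FreeCommMagma.mk v) - gv) := by
            rw [sub_mul, mul_sub]; abel
          rw [h1, h2]
          exact TwoSidedIdeal.add_mem _
            (TwoSidedIdeal.mul_mem_right _ _ _ hu)
            (TwoSidedIdeal.mul_mem_left _ _ _ hv)
        -- Step B : expand the product
        have hB : gu * gv = ∑ a ∈ Finset.range p, ∑ b ∈ Finset.range q,
            ((cu a * cv b : ℤ) : K) • mono K (ppow x1 a * ppow x1 b) := by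
          rw [hgu, hgv, Finset.sum_mul_sum]
          refine Finset.sum_congr rfl fun a _ => Finset.sum_congr rfl fun b _ => ?_
          rw [smul_mul_smul_comm, ← mono_mul, Int.cast_mul]
        -- canonical normal form
        set N : MonoidAlgebra K (FreeCommMagma Unit)
          := (∑ j ∈ Finset.range p, ((cu j : ℤ) : K) • P (j+1))
            + (∑ j ∈ Finset.range q, ((cv j : ℤ) : K) • P (j+1)) - P 1 with hN
        -- G = N
        have hGN : G = N := by
          rw [hG, hm, Finset.sum_range_succ']
          have hc0 : ((c 0 : ℤ) : K) = 0 := by simp [hc]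
          rw [hc0, zero_smul, add_zero]
          have hterm : ∀ j : ℕ, ((c (j+1) : ℤ) : K) • P (j+1)
              = ((cu j : ℤ) : K) • P (j+1) + ((cv j : ℤ) : K) • P (j+1)
                - (if j = 0 then P 1 else 0) := by
            intro j
            rw [hcsucc j]
            push_cast
            rw [sub_smul, add_smul, ite_smul]
            congr 1
            split <;> simp_all
          rw [Finset.sum_congr rfl fun j _ => hterm j]
          rw [Finset.sum_sub_distrib, Finset.sum_add_distrib]
          have e1 : ∑ j ∈ Finset.range m, ((cu j : ℤ) : K) • P (j+1)
              = ∑ j ∈ Finset.range p, ((cu j : ℤ) : K) • P (j+1) := by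
            rw [← Finset.sum_subset (Finset.range_subset_range.mpr hpm)
              (fun j _ hj => by rw [hu0 j (by simpa using hj)]; simp)]
          have e2 : ∑ j ∈ Finset.range m, ((cv j : ℤ) : K) • P (j+1)
              = ∑ j ∈ Finset.range q, ((cv j : ℤ) : K) • P (j+1) := by
            rw [← Finset.sum_subset (Finset.range_subset_range.mpr hqm)
              (fun j _ hj => by rw [hv0 j (by simpa using hj)]; simp)]
          have e3 : ∑ j ∈ Finset.range m, (if j = 0 then P 1 else 0) = P 1 := by
            rw [Finset.sum_ite_eq' (Finset.range m) 0 (fun _ => P 1)]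
            simp [show 0 < m by omega]
          rw [e1, e2, e3, hN]
        -- the double sum of generators
        have hH : (∑ a ∈ Finset.range p, ∑ b ∈ Finset.range q,
            ((cu a * cv b : ℤ) : K) • (P (a+1) + P (b+1) - P 1)) = N := by
          have inner : ∀ a, (∑ b ∈ Finset.range q,
              ((cu a * cv b : ℤ) : K) • (P (a+1) + P (b+1) - P 1))
              = ((cu a : ℤ) : K) • (P (a+1)
                + (∑ j ∈ Finset.range q, ((cv j : ℤ) : K) • P (j+1)) - P 1) := by
            intro a
            have step : ∀ b, ((cu a * cv b : ℤ) : K) • (P (a+1) + P (b+1) - P 1)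
                = ((cu a : ℤ) : K) • (((cv b : ℤ) : K) • P (a+1)
                  + ((cv b : ℤ) : K) • P (b+1) - ((cv b : ℤ) : K) • P 1) := by
              intro b
              rw [Int.cast_mul, mul_smul, smul_sub, smul_add]
            rw [Finset.sum_congr rfl fun b _ => step b]
            rw [← Finset.smul_sum]
            congr 1
            rw [Finset.sum_sub_distrib, Finset.sum_add_distrib]
            rw [← Finset.sum_smul, ← Finset.sum_smul, hv1K, one_smul, one_smul]
          rw [Finset.sum_congr rfl fun a _ => inner a]
          have outer : ∀ a, ((cu a : ℤ) : K) • (P (a+1)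
              + (∑ j ∈ Finset.range q, ((cv j : ℤ) : K) • P (j+1)) - P 1)
              = ((cu a : ℤ) : K) • P (a+1)
                + ((cu a : ℤ) : K) • (∑ j ∈ Finset.range q, ((cv j : ℤ) : K) • P (j+1))
                - ((cu a : ℤ) : K) • P 1 := by
            intro a; rw [smul_sub, smul_add]
          rw [Finset.sum_congr rfl fun a _ => outer a]
          rw [Finset.sum_sub_distrib, Finset.sum_add_distrib]
          rw [← Finset.sum_smul, ← Finset.sum_smul, hu1K, one_smul, one_smul, hN]
        -- gu*gv - G is a combination of generators
        have hC : gu * gv - G = ∑ a ∈ Finset.range p, ∑ b ∈ Finset.range q,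
            ((cu a * cv b : ℤ) : K) • Efam K a b := by
          rw [hB, hGN, ← hH, ← Finset.sum_sub_distrib]
          refine Finset.sum_congr rfl fun a _ => ?_
          rw [← Finset.sum_sub_distrib]
          refine Finset.sum_congr rfl fun b _ => ?_
          rw [← smul_sub]
          congr 1
          rw [Efam]
          show mono K (ppow x1 a * ppow x1 b) - (mono K (ppow x1 (a+1))
            + mono K (ppow x1 (b+1)) - mono K (ppow x1 1)) = _
          abel
        have hCmem : gu * gv - G ∈ I := by
          rw [hC]
          refine sum_mem fun a _ => sum_mem fun b _ => ?_
          rw [Int.cast_smul_eq_zsmul]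
          exact zsmul_mem (Efam_mem a b) _
        have : mono K (FreeCommMagma.mk (u * v)) - G
            = (mono K (FreeCommMagma.mk (u * v)) - gu * gv) + (gu * gv - G) := by abel
        rw [this]
        exact TwoSidedIdeal.add_mem _ hA hCmem

end PartTwo

end Evanescent

open Evanescent in
/-- (i) Every element of the two-sided ideal `ℰ` generated by the
`E_{p,q}` has augmentation `0` and vanishing Peirce polynomial, hence every nonzero
element of `ℰ` is a Peirce-evanescent identity; (ii) every monomial `w` of degree `n` is
congruent mod `ℰ` to an integer combination `π(w)` of `x¹, …, xⁿ` of augmentation `1`;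
for `n ≥ 4` and `w ≠ xⁿ`, `w − π(w)` is a Peirce-evanescent identity. -/
theorem evanescent_ideal_univariate
    {K : Type*} [Field K] (hchar : (2 : K) ≠ 0) :
    (∀ f ∈ TwoSidedIdeal.span {f : MonoidAlgebra K (FreeCommMagma Unit) |
        ∃ p q : ℕ, f = Efam K p q},
      aug K f = 0 ∧ Dp K () f = 0) ∧
    (∀ w : FreeCommMagma Unit,
      ∃ g : MonoidAlgebra K (FreeCommMagma Unit),
        mono K w - g ∈ TwoSidedIdeal.span {f : MonoidAlgebra K (FreeCommMagma Unit) |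
          ∃ p q : ℕ, f = Efam K p q} ∧
        (∃ c : ℕ → ℤ,
          g = ∑ k ∈ Finset.range (FreeCommMagma.count () w), (c k : K) • mono K (ppow x1 k)) ∧
        aug K g = 1 ∧
        (4 ≤ FreeCommMagma.count () w → w ≠ ppow x1 (FreeCommMagma.count () w - 1) →
          mono K w - g ≠ 0)) := by
  constructor
  · intro f hf
    exact mem_span_of_mem_span hf
  · intro w
    induction w using Quot.ind with
    | _ w =>
      obtain ⟨c, hc0, hc1, hcmem⟩ := key (K := K) w
      set n := countAux () w with hn
      have hcount : FreeCommMagma.count () (FreeCommMagma.mk w) = n := rfl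
      refine ⟨∑ k ∈ Finset.range n, (c k : K) • mono K (ppow x1 k), hcmem, ⟨c, rfl⟩, ?_, ?_⟩
      · rw [map_sum]
        simp only [map_smul, aug_mono, smul_eq_mul, mul_one]
        have := congrArg (fun z : ℤ => (z : K)) hc1
        push_cast at this
        simpa using this
      · intro h4 hne heq
        have hppow : ∀ k, k ∈ Finset.range n → ppow x1 k ≠ FreeCommMagma.mk w := by
          intro k hk hkw
          have hcp : FreeCommMagma.count () (ppow x1 k) = k + 1 := count_ppow k
          rw [hkw, hcount] at hcp
          have hk1 : k = n - 1 := by omega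
          have : FreeCommMagma.mk w = ppow x1 (n - 1) := by rw [← hk1]; exact hkw.symm
          exact hne this
        have hev := congrArg (fun f : MonoidAlgebra K (FreeCommMagma Unit) =>
          f.coeff (FreeCommMagma.mk w)) (sub_eq_zero.mp heq)
        change (mono K (FreeCommMagma.mk w)).coeff (FreeCommMagma.mk w)
          = (∑ k ∈ Finset.range n, (c k : K) • mono K (ppow x1 k)).coeff
            (FreeCommMagma.mk w) at hev
        have hL : (mono K (FreeCommMagma.mk w)).coeff (FreeCommMagma.mk w) = 1 := by
          rw [mono]
          exact Finsupp.single_eq_same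
        have hR : (∑ k ∈ Finset.range n, (c k : K) • mono K (ppow x1 k)).coeff
            (FreeCommMagma.mk w) = 0 := by
          rw [MonoidAlgebra.coeff_sum, Finsupp.finset_sum_apply]
          refine Finset.sum_eq_zero fun k hk => ?_
          rw [MonoidAlgebra.coeff_smul, Finsupp.smul_apply, mono, MonoidAlgebra.coeff_single,
            Finsupp.single_eq_of_ne' (hppow k hk), smul_zero]
        rw [hL, hR] at hev
        exact one_ne_zero hev
end
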